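/- Let p = 2r be an even positive integer. For z ∈ ℂ and 1 ≤ m ≤ r define the polynomials q_{m,j}(z) by the recursion q_{m,0}(z) = 0, q_{m,1}(z) = 1, and q_{m,j}(z) = (z/m)·q_{m,j−1}(z) + q_{m,j−2}(z) for 2 ≤ j ≤ 2m. If 1 ≤ r ≤ 8, then for all integers m, ℓ with 1 ≤ m ≤ r and 1 ≤ ℓ ≤ 2m, and for every z ∈ ℂ with |∑_{k=0}^{p} z^k/k!| ≤ 1, one has (2·m^{2r}/((r−m)!·(r+m)!)) · |q_{m,2m−ℓ+1}(z)| < √(2/π) · 4.74^p/√p; and if r ≥ 9 the same quantity is strictly less than 4.986^p/(π·√(p−1)). -/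

import Mathlib

open Finset Polynomial

private lemma abs_prod_lower (a : ℝ) (ha : 0 ≤ a) (s : Multiset ℂ)
    (hs : ∀ w ∈ s, a ≤ ‖w‖) :
    a ^ Multiset.card s ≤ ‖s.prod‖ := by
  induction s using Multiset.induction_on with
  | empty => simp
  | cons w s ih =>
    have hw : a ≤ ‖w‖ := hs w (Multiset.mem_cons_self w s)
    have hrest := ih (fun x hx => hs x (Multiset.mem_cons_of_mem hx))
    rw [Multiset.prod_cons, Multiset.card_cons, pow_succ, norm_mul, mul_comm (a ^ _)]
    exact mul_le_mul hw hrest (pow_nonneg ha _) (norm_nonneg _)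

/-- Eneström–Kakeya style root bound for the truncated exponential. -/
private lemma root_bound (p : ℕ) (hp : 1 ≤ p) (ρ : ℂ)
    (h : ∑ i ∈ Finset.range (p + 1), ((p.factorial : ℂ) / (i.factorial : ℂ)) * ρ ^ i = 0) :
    ‖ρ‖ ≤ p := by
  by_contra hx
  push_neg at hx
  have hppos : (0:ℝ) < p := by exact_mod_cast hp
  set w : ℂ := ρ / p with hwdef
  have hwabs : ‖w‖ = ‖ρ‖ / p := by
    rw [hwdef, norm_div, Complex.norm_natCast]
  have hw1 : 1 < ‖w‖ := by
    rw [hwabs]; rw [lt_div_iff₀ hppos]; simpa using hx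
  set b : ℕ → ℝ := fun i => (p.factorial : ℝ) / (i.factorial : ℝ) * (p : ℝ) ^ i with hbdef
  have hbpos : ∀ i, 0 < b i := by
    intro i
    exact mul_pos (div_pos (by exact_mod_cast p.factorial_pos) (by exact_mod_cast i.factorial_pos))
      (pow_pos hppos i)
  have hbmono : ∀ i, i < p → b i ≤ b (i + 1) := by
    intro i hi
    have hfs : ((i+1).factorial : ℝ) = (i+1) * (i.factorial : ℝ) := by
      exact_mod_cast Nat.factorial_succ i
    have hifpos : (0:ℝ) < (i.factorial : ℝ) := by exact_mod_cast i.factorial_pos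
    have hfp : (0:ℝ) < (p.factorial : ℝ) := by exact_mod_cast p.factorial_pos
    rw [hbdef]
    simp only []
    rw [hfs, pow_succ]
    rw [div_mul_eq_mul_div, div_mul_eq_mul_div, div_le_div_iff₀ (by positivity) (by positivity)]
    have hip : (i:ℝ) + 1 ≤ (p:ℝ) := by exact_mod_cast hi
    nlinarith [mul_pos (mul_pos hfp (pow_pos hppos i)) hifpos]
  -- rewrite the vanishing sum in terms of w
  have h2 : ∑ i ∈ Finset.range (p + 1), ((b i : ℝ) : ℂ) * w ^ i = 0 := by
    rw [← h]
    apply Finset.sum_congr rfl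
    intro i _
    have hρ : ρ = (p:ℂ) * w := by
      rw [hwdef, mul_div_cancel₀]
      exact_mod_cast (Nat.cast_ne_zero (R := ℂ)).2 (by omega)
    rw [hρ, mul_pow, hbdef]
    push_cast
    ring
  have h3 : ∑ i ∈ Finset.range (p + 1), ((b i : ℝ) : ℂ) * w ^ (i + 1) = 0 := by
    have : ∑ i ∈ Finset.range (p + 1), ((b i : ℝ) : ℂ) * w ^ (i + 1)
        = (∑ i ∈ Finset.range (p + 1), ((b i : ℝ) : ℂ) * w ^ i) * w := by
      rw [Finset.sum_mul]
      exact Finset.sum_congr rfl (fun i _ => by ring)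
    rw [this, h2, zero_mul]
  have h4 : ((b p : ℝ) : ℂ) * w ^ (p + 1)
      = -∑ i ∈ Finset.range p, ((b i : ℝ) : ℂ) * w ^ (i + 1) := by
    rw [Finset.sum_range_succ] at h3
    linear_combination h3
  have h5 : ∑ i ∈ Finset.range p, ((b (i+1) : ℝ) : ℂ) * w ^ (i + 1) = -((b 0 : ℝ) : ℂ) := by
    rw [Finset.sum_range_succ'] at h2
    simpa using by linear_combination h2
  have key : ((b p : ℝ) : ℂ) * w ^ (p + 1)
      = ((b 0 : ℝ) : ℂ) + ∑ i ∈ Finset.range p, (((b (i+1) - b i : ℝ)) : ℂ) * w ^ (i + 1) := by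
    have hsplit : ∑ i ∈ Finset.range p, (((b (i+1) - b i : ℝ)) : ℂ) * w ^ (i + 1)
        = ∑ i ∈ Finset.range p, ((b (i+1) : ℝ) : ℂ) * w ^ (i + 1)
          - ∑ i ∈ Finset.range p, ((b i : ℝ) : ℂ) * w ^ (i + 1) := by
      rw [← Finset.sum_sub_distrib]
      apply Finset.sum_congr rfl
      intro i _
      push_cast
      ring
    rw [hsplit, h5, h4]
    ring
  -- take absolute values
  set x : ℝ := ‖w‖ with hxdef
  have hx0 : (0:ℝ) ≤ x := norm_nonneg w
  have habs : b p * x ^ (p + 1)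
      ≤ b 0 + ∑ i ∈ Finset.range p, (b (i+1) - b i) * x ^ (i + 1) := by
    have h1 : ‖((b p : ℝ) : ℂ) * w ^ (p + 1)‖ = b p * x ^ (p + 1) := by
      rw [norm_mul, norm_pow, Complex.norm_real, Real.norm_eq_abs, abs_of_pos (hbpos p)]
    calc b p * x ^ (p + 1) = ‖((b p : ℝ) : ℂ) * w ^ (p + 1)‖ := h1.symm
      _ = ‖((b 0 : ℝ) : ℂ)
            + ∑ i ∈ Finset.range p, (((b (i+1) - b i : ℝ)) : ℂ) * w ^ (i + 1)‖ := by rw [key]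
      _ ≤ ‖((b 0 : ℝ) : ℂ)‖
            + ‖∑ i ∈ Finset.range p, (((b (i+1) - b i : ℝ)) : ℂ) * w ^ (i + 1)‖ :=
          norm_add_le _ _
      _ ≤ b 0 + ∑ i ∈ Finset.range p, (b (i+1) - b i) * x ^ (i + 1) := by
          gcongr
          · rw [Complex.norm_real, Real.norm_eq_abs, abs_of_pos (hbpos 0)]
          · calc ‖∑ i ∈ Finset.range p, (((b (i+1) - b i : ℝ)) : ℂ) * w ^ (i + 1)‖
                ≤ ∑ i ∈ Finset.range p, ‖(((b (i+1) - b i : ℝ)) : ℂ) * w ^ (i + 1)‖ :=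
                norm_sum_le _ _
              _ = ∑ i ∈ Finset.range p, (b (i+1) - b i) * x ^ (i + 1) := by
                apply Finset.sum_congr rfl
                intro i hi
                rw [norm_mul, norm_pow, Complex.norm_real, Real.norm_eq_abs,
                  abs_of_nonneg (sub_nonneg.2 (hbmono i (Finset.mem_range.1 hi)))]
  have hxp : ∀ i ∈ Finset.range p, (b (i+1) - b i) * x ^ (i + 1) ≤ (b (i+1) - b i) * x ^ p := by
    intro i hi
    have : x ^ (i+1) ≤ x ^ p :=
      pow_le_pow_right₀ (le_of_lt hw1) (Finset.mem_range.1 hi)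
    exact mul_le_mul_of_nonneg_left this (sub_nonneg.2 (hbmono i (Finset.mem_range.1 hi)))
  have htel : ∑ i ∈ Finset.range p, (b (i+1) - b i) = b p - b 0 := Finset.sum_range_sub b p
  have hfinal : b p * x ^ (p + 1) ≤ b p * x ^ p := by
    calc b p * x ^ (p + 1) ≤ b 0 + ∑ i ∈ Finset.range p, (b (i+1) - b i) * x ^ (i + 1) := habs
      _ ≤ b 0 * x ^ p + ∑ i ∈ Finset.range p, (b (i+1) - b i) * x ^ p := by
          have h1x : (1:ℝ) ≤ x ^ p := one_le_pow₀ (le_of_lt hw1)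
          have hb0 : b 0 ≤ b 0 * x ^ p := by nlinarith [hbpos 0]
          exact add_le_add hb0 (Finset.sum_le_sum hxp)
      _ = b 0 * x ^ p + (b p - b 0) * x ^ p := by rw [← Finset.sum_mul, htel]
      _ = b p * x ^ p := by ring
  have : x ^ (p+1) ≤ x ^ p := le_of_mul_le_mul_left (by linarith [hfinal]) (hbpos p)
  have hgt : x ^ p < x ^ (p + 1) := by
    calc x ^ p = x ^ p * 1 := (mul_one _).symm
      _ < x ^ p * x := by
        apply mul_lt_mul_of_pos_left hw1 (pow_pos (lt_trans one_pos hw1) p)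
      _ = x ^ (p+1) := (pow_succ x p).symm
  linarith

/-- If the stability polynomial value is small, `|z|` is at most `p + t` whenever `t^p ≥ p!`. -/
private lemma radius_bound (p : ℕ) (hp : 1 ≤ p) (z : ℂ)
    (hz : ‖∑ k ∈ Finset.range (p + 1), z ^ k / (Nat.factorial k : ℂ)‖ ≤ 1)
    (t : ℝ) (ht : 0 ≤ t) (hts : (p.factorial : ℝ) ≤ t ^ p) :
    ‖z‖ ≤ p + t := by
  by_contra hgt
  push_neg at hgt
  set P : Polynomial ℂ :=
    ∑ i ∈ Finset.range (p + 1), Polynomial.C ((p.factorial : ℂ) / (i.factorial : ℂ)) * Polynomial.X ^ i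
    with hPdef
  have hcoeff : P.coeff p = 1 := by
    rw [hPdef, Polynomial.finset_sum_coeff]
    rw [Finset.sum_eq_single p]
    · rw [Polynomial.coeff_C_mul, Polynomial.coeff_X_pow, if_pos rfl, mul_one,
        div_self]
      exact_mod_cast (Nat.cast_ne_zero (R := ℂ)).2 p.factorial_ne_zero
    · intro i _ hip
      rw [Polynomial.coeff_C_mul, Polynomial.coeff_X_pow, if_neg (fun hh => hip hh.symm), mul_zero]
    · intro hnot
      exact absurd (Finset.self_mem_range_succ p) hnot
  have hdeg : P.natDegree ≤ p := by
    rw [hPdef]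
    apply Polynomial.natDegree_sum_le_of_forall_le
    intro i hi
    exact le_trans (Polynomial.natDegree_C_mul_X_pow_le _ i)
      (Nat.lt_succ_iff.1 (Finset.mem_range.1 hi))
  have hmonic : P.Monic := Polynomial.monic_of_natDegree_le_of_coeff_eq_one p hdeg hcoeff
  have hndeg : P.natDegree = p := by
    apply le_antisymm hdeg
    by_contra hlt
    push_neg at hlt
    have := Polynomial.coeff_eq_zero_of_natDegree_lt hlt
    rw [hcoeff] at this
    exact one_ne_zero this
  have hsplits := IsAlgClosed.splits P
  have hcard : Multiset.card P.roots = p := by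
    rw [← hndeg]
    exact (Polynomial.splits_iff_card_roots.1 hsplits)
  have hfact : P = (P.roots.map fun a => Polynomial.X - Polynomial.C a).prod :=
    hsplits.eq_prod_roots_of_monic hmonic
  -- evaluate at z
  have hevalprod : P.eval z = ((P.roots.map fun a => z - a)).prod := by
    conv_lhs => rw [hfact]
    rw [Polynomial.eval_multiset_prod, Multiset.map_map]
    congr 1
    apply Multiset.map_congr rfl
    intro a _
    simp
  -- each root has modulus at most p
  have hroots : ∀ ρ ∈ P.roots, ‖ρ‖ ≤ p := by
    intro ρ hρ
    have hPne : P ≠ 0 := hmonic.ne_zero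
    have hiszero : P.eval ρ = 0 := (Polynomial.mem_roots hPne).1 hρ
    apply root_bound p hp ρ
    rw [← hiszero, hPdef]
    rw [Polynomial.eval_finset_sum]
    apply Finset.sum_congr rfl
    intro i _
    simp
  -- lower bound for |P(z)|
  have hxp : (p : ℝ) + t < ‖z‖ := hgt
  have hamin : ∀ w ∈ P.roots.map fun a => z - a, ‖z‖ - p ≤ ‖w‖ := by
    intro w hw
    obtain ⟨ρ, hρ, rfl⟩ := Multiset.mem_map.1 hw
    have h1 := norm_add_le (z - ρ) ρ
    simp only [sub_add_cancel] at h1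
    have := hroots ρ hρ
    linarith
  have hlow : (‖z‖ - p) ^ p ≤ ‖P.eval z‖ := by
    rw [hevalprod]
    have hcard2 : Multiset.card (P.roots.map fun a => z - a) = p := by
      rw [Multiset.card_map, hcard]
    calc (‖z‖ - p) ^ p
        = (‖z‖ - p) ^ Multiset.card (P.roots.map fun a => z - a) := by rw [hcard2]
      _ ≤ ‖((P.roots.map fun a => z - a)).prod‖ :=
          abs_prod_lower _ (by linarith) _ hamin
  -- upper bound for |P(z)|
  have hup : ‖P.eval z‖ ≤ (p.factorial : ℝ) := by
    have heq : P.eval z = (p.factorial : ℂ) *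
        ∑ k ∈ Finset.range (p + 1), z ^ k / (Nat.factorial k : ℂ) := by
      rw [hPdef, Polynomial.eval_finset_sum, Finset.mul_sum]
      apply Finset.sum_congr rfl
      intro i _
      simp only [Polynomial.eval_mul, Polynomial.eval_C, Polynomial.eval_pow, Polynomial.eval_X]
      ring
    rw [heq, norm_mul, Complex.norm_natCast]
    calc (p.factorial : ℝ) * ‖∑ k ∈ Finset.range (p + 1), z ^ k / (Nat.factorial k : ℂ)‖
        ≤ (p.factorial : ℝ) * 1 := by
          apply mul_le_mul_of_nonneg_left hz (by positivity)
      _ = (p.factorial : ℝ) := mul_one _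
  -- contradiction
  have h1 : t ^ p < (‖z‖ - p) ^ p := by
    apply pow_lt_pow_left₀ _ ht (by omega)
    linarith
  linarith

private lemma q_bound (q : ℕ → ℕ → ℂ → ℂ)
    (hq0 : ∀ m z, q m 0 z = 0)
    (hq1 : ∀ m z, q m 1 z = 1)
    (hqrec : ∀ m j z, 2 ≤ j → j ≤ 2 * m →
      q m j z = (z / m) * q m (j - 1) z + q m (j - 2) z)
    (m : ℕ) (hm : 1 ≤ m) (z : ℂ) (lam : ℝ) (hl1 : 1 ≤ lam)
    (hquad : ‖z‖ / m * lam + 1 ≤ lam ^ 2) :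
    ∀ j, j ≤ 2 * m → ‖q m j z‖ ≤ lam ^ (j - 1) := by
  intro j
  induction j using Nat.strong_induction_on with
  | _ j ih =>
    intro hj2m
    have hl0 : (0:ℝ) < lam := lt_of_lt_of_le one_pos hl1
    have hc0 : (0:ℝ) ≤ ‖z‖ / m := by positivity
    match j, hj2m with
    | 0, _ => simpa [hq0] using by positivity
    | 1, _ => simp [hq1]
    | (jj+2), hj2m =>
      set j := jj + 2
      have habs : ‖q m j z‖
          ≤ ‖z‖ / m * ‖q m (j-1) z‖ + ‖q m (j-2) z‖ := by
        rw [hqrec m j z (by omega) hj2m]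
        calc ‖(z / m) * q m (j-1) z + q m (j-2) z‖
            ≤ ‖(z / m) * q m (j-1) z‖ + ‖q m (j-2) z‖ :=
              norm_add_le _ _
          _ = ‖z‖ / m * ‖q m (j-1) z‖ + ‖q m (j-2) z‖ := by
              rw [norm_mul, norm_div, Complex.norm_natCast]
      have ih1 : ‖q m (j-1) z‖ ≤ lam ^ (j - 2) := by
        have := ih (j-1) (by omega) (by omega)
        convert this using 2; omega
      have ih2 : ‖q m (j-2) z‖ ≤ lam ^ (j - 3) := by
        have := ih (j-2) (by omega) (by omega)
        convert this using 2; omega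
      rcases Nat.eq_or_lt_of_le (show 2 ≤ j by omega) with h2 | h3
      · -- j = 2
        have hj : jj = 0 := by omega
        subst hj
        have hq2 : ‖q m 2 z‖ ≤ ‖z‖ / m := by
          have h0 := hq0 m z
          have h1 := hq1 m z
          calc ‖q m 2 z‖
              ≤ ‖z‖ / m * ‖q m 1 z‖ + ‖q m 0 z‖ := habs
            _ = ‖z‖ / m := by rw [h0, h1]; simp
        have hcl : ‖z‖ / m ≤ lam := by nlinarith
        exact (show ‖q m 2 z‖ ≤ lam ^ (2-1) by simpa using le_trans hq2 hcl)
      · -- j ≥ 3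
        have e1 : j - 1 = (j - 3) + 2 := by omega
        have e2 : j - 2 = (j - 3) + 1 := by omega
        calc ‖q m j z‖
            ≤ ‖z‖ / m * lam ^ (j-2) + lam ^ (j-3) := by
              have := mul_le_mul_of_nonneg_left ih1 hc0
              linarith
          _ = lam ^ (j-3) * (‖z‖ / m * lam + 1) := by
              rw [e2, pow_succ]; ring
          _ ≤ lam ^ (j-3) * lam ^ 2 := by
              apply mul_le_mul_of_nonneg_left hquad (by positivity)
          _ = lam ^ (j-1) := by rw [e1, pow_add]

-- n! ≤ n^k * (n-k)!
private lemma fac_le_pow_mul (n : ℕ) : ∀ k, k ≤ n → (n.factorial : ℝ) ≤ (n:ℝ) ^ k * ((n - k).factorial : ℝ) := by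
  intro k
  induction k with
  | zero => intro _; simp
  | succ k ih =>
    intro hk
    have h1 := ih (by omega)
    have h2 : (n - k).factorial = (n - k) * (n - (k+1)).factorial := by
      have : n - k = (n - (k+1)) + 1 := by omega
      rw [this, Nat.factorial_succ]
    have h3 : ((n - k : ℕ) : ℝ) ≤ (n : ℝ) := by
      exact_mod_cast Nat.sub_le n k
    have hpos : (0:ℝ) ≤ ((n - (k+1)).factorial : ℝ) := by positivity
    have hnn : (0:ℝ) ≤ (n:ℝ)^k := by positivity
    calc (n.factorial : ℝ) ≤ (n:ℝ)^k * ((n - k).factorial : ℝ) := h1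
      _ = (n:ℝ)^k * (((n-k:ℕ):ℝ) * ((n - (k+1)).factorial : ℝ)) := by
          rw [h2]; push_cast [Nat.cast_sub (by omega : k ≤ n)]; ring
      _ ≤ (n:ℝ)^k * ((n:ℝ) * ((n - (k+1)).factorial : ℝ)) := by
          apply mul_le_mul_of_nonneg_left _ hnn
          exact mul_le_mul_of_nonneg_right h3 hpos
      _ = (n:ℝ)^(k+1) * ((n - (k+1)).factorial : ℝ) := by rw [pow_succ]; ring

-- (2r)! ≤ r^(2r) for r ≥ 3
private lemma two_r_fac_le : ∀ r : ℕ, 3 ≤ r → ((2*r).factorial : ℝ) ≤ (r:ℝ) ^ (2*r) := by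
  intro r
  induction r with
  | zero => omega
  | succ n ih =>
    intro hr
    rcases Nat.lt_or_ge n 3 with h3 | h3
    · have hn : n = 2 := by omega
      subst hn
      norm_num [Nat.factorial]
    · have hIH := ih h3
      have hnpos : (0:ℝ) < (n:ℝ) := by
        have : (3:ℝ) ≤ (n:ℝ) := by exact_mod_cast h3
        linarith
      have hb : 2 * (n:ℝ)^n ≤ ((n:ℝ)+1)^n := by
        have hne : (n:ℝ) ≠ 0 := ne_of_gt hnpos
        have hd : (0:ℝ) ≤ 1/(n:ℝ) := by positivity
        have h := one_add_mul_le_pow (a := 1/(n:ℝ)) (by linarith) n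
        have h2 : (1:ℝ) + (n:ℝ) * (1/(n:ℝ)) = 2 := by field_simp; norm_num
        have h3' : ((1:ℝ) + 1/(n:ℝ))^n = ((n:ℝ)+1)^n / (n:ℝ)^n := by
          rw [show (1:ℝ) + 1/(n:ℝ) = ((n:ℝ)+1)/(n:ℝ) by field_simp, div_pow]
        rw [h2, h3', le_div_iff₀ (pow_pos hnpos n)] at h
        linarith
      have hfac : (((2*(n+1)).factorial : ℕ) : ℝ)
          = (2*(n:ℝ)+2) * ((2*(n:ℝ)+1) * (((2*n).factorial : ℕ) : ℝ)) := by
        have e : 2*(n+1) = ((2*n+1)+1) := by ring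
        rw [e, Nat.factorial_succ, Nat.factorial_succ]
        push_cast
        ring
      have e1 : ((n:ℝ)+1)^(2*(n+1)) = (((n:ℝ)+1)^n)^2 * ((n:ℝ)+1)^2 := by
        rw [← pow_mul, ← pow_add]
        congr 1
        ring
      have e2 : (n:ℝ)^(2*n) = ((n:ℝ)^n)^2 := by
        rw [← pow_mul]
        congr 1
        ring
      have hYpos : (0:ℝ) < ((n:ℝ)+1)^n := by positivity
      have hXpos : (0:ℝ) < (n:ℝ)^n := pow_pos hnpos n
      push_cast
      rw [hfac]
      push_cast at e1 ⊢
      rw [e1]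
      rw [e2] at hIH
      set X : ℝ := (n:ℝ)^n with hX
      set Y : ℝ := ((n:ℝ)+1)^n with hY
      have hsq : 4 * X^2 ≤ Y^2 := by nlinarith [hb, hXpos]
      have hF : (0:ℝ) ≤ (((2*n).factorial : ℕ) : ℝ) := by positivity
      have c1 : (2*(n:ℝ)+2) * ((2*(n:ℝ)+1) * (((2*n).factorial : ℕ) : ℝ))
          ≤ (2*(n:ℝ)+2) * ((2*(n:ℝ)+1) * X^2) := by
        have : (0:ℝ) ≤ (2*(n:ℝ)+2) * (2*(n:ℝ)+1) := by positivity
        nlinarith [hIH]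
      have c2 : (2*(n:ℝ)+2) * ((2*(n:ℝ)+1) * X^2) ≤ Y^2 * ((n:ℝ)+1)^2 := by
        nlinarith [hsq, sq_nonneg X, hnpos]
      linarith

-- Stirling lower bound : √π * (√(2n) * (n/e)^n) ≤ n!
private lemma stirling_lower (n : ℕ) (hn : 1 ≤ n) :
    Real.sqrt Real.pi * (Real.sqrt (2*(n:ℝ)) * ((n:ℝ)/Real.exp 1)^n) ≤ (n.factorial : ℝ) := by
  obtain ⟨m, rfl⟩ := Nat.exists_eq_add_of_le hn
  have hanti := Stirling.stirlingSeq'_antitone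
  have htend : Filter.Tendsto (Stirling.stirlingSeq ∘ Nat.succ) Filter.atTop
      (nhds (Real.sqrt Real.pi)) := by
    apply Stirling.tendsto_stirlingSeq_sqrt_pi.comp
    exact Filter.tendsto_add_atTop_nat 1
  have hge : Real.sqrt Real.pi ≤ Stirling.stirlingSeq (m + 1) := by
    have := hanti.le_of_tendsto htend m
    simpa [Function.comp] using this
  have hdefn : Stirling.stirlingSeq (m+1)
      = ((m+1).factorial : ℝ) / (Real.sqrt (2*((m+1):ℕ)) * (((m+1):ℕ)/Real.exp 1)^((m+1):ℕ)) := by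
    rfl
  have hdpos : (0:ℝ) < Real.sqrt (2*(((m+1):ℕ):ℝ)) * ((((m+1):ℕ):ℝ)/Real.exp 1)^((m+1):ℕ) := by
    apply mul_pos
    · apply Real.sqrt_pos.2
      positivity
    · apply pow_pos
      positivity
  rw [hdefn, le_div_iff₀ hdpos] at hge
  calc Real.sqrt Real.pi * (Real.sqrt (2*(((1+m):ℕ):ℝ)) * ((((1+m):ℕ):ℝ)/Real.exp 1)^((1+m):ℕ))
      = Real.sqrt Real.pi * (Real.sqrt (2*(((m+1):ℕ):ℝ)) * ((((m+1):ℕ):ℝ)/Real.exp 1)^((m+1):ℕ)) := by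
        rw [Nat.add_comm 1 m]
    _ ≤ ((m+1).factorial : ℝ) := hge
    _ = (((1+m).factorial : ℕ) : ℝ) := by rw [Nat.add_comm 1 m]

private lemma chain (r m : ℕ) (hm : 1 ≤ m) (hmr : m ≤ r) :
    2 * (m:ℝ)^(2*r) * ((3*(r:ℝ))/m + m/(3*(r:ℝ)))^(2*m-1)
        / (((r-m).factorial : ℝ) * ((r+m).factorial : ℝ))
      ≤ 2 * r * ((10*(r:ℝ))/3)^(2*r-1) * Real.exp (9*r/50) / (((2*r).factorial : ℕ) : ℝ) := by
  have hr1 : 1 ≤ r := le_trans hm hmr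
  set k : ℕ := r - m with hk
  set M : ℝ := (m:ℝ) with hM
  set R : ℝ := (r:ℝ) with hR
  have hM1 : (1:ℝ) ≤ M := by rw [hM]; exact_mod_cast hm
  have hMR : M ≤ R := by rw [hM, hR]; exact_mod_cast hmr
  have hM0 : (0:ℝ) < M := by linarith
  have hR0 : (0:ℝ) < R := by linarith
  set lam : ℝ := 3*R/M + M/(3*R) with hlam
  have hlam0 : (0:ℝ) ≤ lam := by positivity
  have hlam_le : lam ≤ 10*R/(3*M) := by
    rw [hlam, div_add_div _ _ (by positivity : M ≠ 0) (by positivity : 3*R ≠ 0),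
      div_le_div_iff₀ (by positivity) (by positivity)]
    nlinarith [sq_nonneg R, sq_nonneg M, mul_pos hR0 hM0]
  set D1 : ℝ := (k.factorial : ℝ) with hD1
  set D2 : ℝ := ((r+m).factorial : ℝ) with hD2
  set D3 : ℝ := (((2*r).factorial : ℕ) : ℝ) with hD3
  have hD1p : (0:ℝ) < D1 := by rw [hD1]; exact_mod_cast k.factorial_pos
  have hD2p : (0:ℝ) < D2 := by rw [hD2]; exact_mod_cast (r+m).factorial_pos
  have hD3p : (0:ℝ) < D3 := by rw [hD3]; exact_mod_cast (2*r).factorial_pos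
  -- numerator chain
  have c1 : lam^(2*m-1) ≤ (10*R/(3*M))^(2*m-1) := pow_le_pow_left₀ hlam0 hlam_le _
  have c2 : M^(2*r) * (10*R/(3*M))^(2*m-1) = M^(2*k+1) * (10*R/3)^(2*m-1) := by
    have hsplit : 2*r = (2*k+1) + (2*m-1) := by omega
    rw [hsplit, pow_add, show 10*R/(3*M) = (10*R/3)/M by ring, div_pow]
    field_simp
  have c3 : M^(2*k+1) ≤ R^(2*k+1) := pow_le_pow_left₀ (le_of_lt hM0) hMR _
  have c4 : R^(2*k+1) * (10*R/3)^(2*m-1) = R * (10*R/3)^(2*r-1) * (9/100)^k := by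
    have h1 : 2*r-1 = (2*m-1) + 2*k := by omega
    have h5 : (10*R/3)^(2*k) * (9/100)^k = R^(2*k) := by
      rw [pow_mul, pow_mul, ← mul_pow]
      congr 1
      ring
    calc R^(2*k+1) * (10*R/3)^(2*m-1) = R * R^(2*k) * (10*R/3)^(2*m-1) := by
          rw [pow_succ]; ring
      _ = R * ((10*R/3)^(2*k) * (9/100)^k) * (10*R/3)^(2*m-1) := by rw [h5]
      _ = R * (10*R/3)^(2*r-1) * (9/100)^k := by rw [h1, pow_add]; ring
  have hnum : M^(2*r) * lam^(2*m-1) ≤ R * (10*R/3)^(2*r-1) * (9/100)^k := by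
    calc M^(2*r) * lam^(2*m-1) ≤ M^(2*r) * (10*R/(3*M))^(2*m-1) :=
          mul_le_mul_of_nonneg_left c1 (by positivity)
      _ = M^(2*k+1) * (10*R/3)^(2*m-1) := c2
      _ ≤ R^(2*k+1) * (10*R/3)^(2*m-1) := mul_le_mul_of_nonneg_right c3 (by positivity)
      _ = R * (10*R/3)^(2*r-1) * (9/100)^k := c4
  -- denominator chain : D3 ≤ (2R)^k * D2
  have hden : D3 ≤ (2*R)^k * D2 := by
    have hk2r : k ≤ 2*r := by omega
    have := fac_le_pow_mul (2*r) k hk2r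
    have he : 2*r - k = r + m := by omega
    rw [he] at this
    rw [hD3, hD2]
    calc (((2*r).factorial : ℕ) : ℝ) ≤ ((2*r : ℕ):ℝ)^k * ((r+m).factorial : ℝ) := this
      _ = (2*R)^k * ((r+m).factorial : ℝ) := by push_cast; ring
  -- putting it together by cross multiplication
  set A : ℝ := 2 * M^(2*r) * lam^(2*m-1) with hA
  set A' : ℝ := 2 * R * (10*R/3)^(2*r-1) * (9/100)^k with hA'
  set B : ℝ := 2 * R * (10*R/3)^(2*r-1) * Real.exp (9*R/50) with hB
  have hA0 : 0 ≤ A := by positivity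
  have hA'0 : 0 ≤ A' := by positivity
  have hAA' : A ≤ A' := by
    rw [hA, hA']
    calc 2 * M^(2*r) * lam^(2*m-1) = 2 * (M^(2*r) * lam^(2*m-1)) := by ring
      _ ≤ 2 * (R * (10*R/3)^(2*r-1) * (9/100)^k) := by linarith [hnum]
      _ = 2 * R * (10*R/3)^(2*r-1) * (9/100)^k := by ring
  have hc6 : ((9:ℝ)/100)^k * (2*R)^k = (9*R/50)^k := by
    rw [← mul_pow]
    congr 1
    ring
  have hc7 : (9*R/50)^k ≤ Real.exp (9*R/50) * D1 := by
    have h := Real.pow_div_factorial_le_exp (x := 9*R/50) (by positivity) k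
    rw [div_le_iff₀ hD1p] at h
    exact h
  have hA'B : A' * (2*R)^k ≤ B * D1 := by
    have e : A' * (2*R)^k = 2 * R * (10*R/3)^(2*r-1) * (9*R/50)^k := by
      rw [hA', ← hc6]; ring
    rw [e, hB]
    calc 2 * R * (10*R/3)^(2*r-1) * (9*R/50)^k
        ≤ 2 * R * (10*R/3)^(2*r-1) * (Real.exp (9*R/50) * D1) :=
          mul_le_mul_of_nonneg_left hc7 (by positivity)
      _ = 2 * R * (10*R/3)^(2*r-1) * Real.exp (9*R/50) * D1 := by ring
  have hcross : A * D3 ≤ B * (D1 * D2) := by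
    calc A * D3 ≤ A' * D3 := mul_le_mul_of_nonneg_right hAA' (le_of_lt hD3p)
      _ ≤ A' * ((2*R)^k * D2) := mul_le_mul_of_nonneg_left hden hA'0
      _ = (A' * (2*R)^k) * D2 := by ring
      _ ≤ (B * D1) * D2 := mul_le_mul_of_nonneg_right hA'B (le_of_lt hD2p)
      _ = B * (D1 * D2) := by ring
  have hgoal : A / (D1 * D2) ≤ B / D3 := by
    rw [div_le_div_iff₀ (by positivity) hD3p]
    exact hcross
  -- match shapes
  have hshape : (((r-m).factorial : ℝ) * ((r+m).factorial : ℝ)) = D1 * D2 := by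
    rw [hD1, hD2, hk]
  calc 2 * (m:ℝ)^(2*r) * ((3*(r:ℝ))/m + m/(3*(r:ℝ)))^(2*m-1)
        / (((r-m).factorial : ℝ) * ((r+m).factorial : ℝ))
      = A / (D1 * D2) := by rw [hshape, hA, hlam, hM, hR]
    _ ≤ B / D3 := hgoal
    _ = 2 * r * ((10*(r:ℝ))/3)^(2*r-1) * Real.exp (9*r/50) / (((2*r).factorial : ℕ) : ℝ) := by
        rw [hB, hD3, hR]

private lemma exp_small' (x : ℝ) (hx1 : x < 1) : Real.exp x ≤ 1/(1-x) := by
  have h := Real.add_one_le_exp (-x)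
  have h2 : 0 < Real.exp (-x) := Real.exp_pos _
  have h3 : Real.exp x = 1 / Real.exp (-x) := by
    rw [Real.exp_neg]; field_simp
  rw [h3]
  exact one_div_le_one_div_of_le (by linarith) (by linarith)

private lemma numeric_a_gen (r : ℕ) (hr : 1 ≤ r) (u : ℝ) (hu : 0 < u) (h2r : 2*(r:ℝ) ≤ u^2)
    (hkey : 2*(r:ℝ)*((10*(r:ℝ))/3)^(2*r-1)*((50:ℝ)/41)^r * u
      < 0.7978 * 4.74^(2*r) * (((2*r).factorial : ℕ):ℝ)) :
    2*(r:ℝ)*((10*(r:ℝ))/3)^(2*r-1)*Real.exp (9*(r:ℝ)/50)/(((2*r).factorial:ℕ):ℝ)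
      < Real.sqrt (2/Real.pi) * 4.74^(2*r) / Real.sqrt (2*(r:ℝ)) := by
  have hR0 : (0:ℝ) < (r:ℝ) := by exact_mod_cast hr
  have hD3 : (0:ℝ) < (((2*r).factorial:ℕ):ℝ) := by exact_mod_cast (2*r).factorial_pos
  have hexp : Real.exp (9*(r:ℝ)/50) ≤ ((50:ℝ)/41)^r := by
    have h1 : 9*(r:ℝ)/50 = r * (9/50) := by ring
    rw [h1, Real.exp_nat_mul]
    apply pow_le_pow_left₀ (Real.exp_pos _).le
    have := exp_small' (9/50) (by norm_num)
    calc Real.exp (9/50:ℝ) ≤ 1/(1-9/50) := this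
      _ = 50/41 := by norm_num
  have hsq2pi : (0.7978:ℝ) ≤ Real.sqrt (2/Real.pi) := by
    have hpi := Real.pi_lt_d4
    have hpi0 := Real.pi_pos
    rw [show (0.7978:ℝ) = Real.sqrt (0.7978^2) by rw [Real.sqrt_sq (by norm_num)]]
    apply Real.sqrt_le_sqrt
    rw [le_div_iff₀ hpi0]
    nlinarith
  have hsqu : Real.sqrt (2*(r:ℝ)) ≤ u := by
    rw [show u = Real.sqrt (u^2) by rw [Real.sqrt_sq hu.le]]
    exact Real.sqrt_le_sqrt h2r
  have hsq2rpos : (0:ℝ) < Real.sqrt (2*(r:ℝ)) := Real.sqrt_pos.2 (by positivity)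
  calc 2*(r:ℝ)*((10*(r:ℝ))/3)^(2*r-1)*Real.exp (9*(r:ℝ)/50)/(((2*r).factorial:ℕ):ℝ)
      ≤ 2*(r:ℝ)*((10*(r:ℝ))/3)^(2*r-1)*((50:ℝ)/41)^r/(((2*r).factorial:ℕ):ℝ) := by
        gcongr
    _ < 0.7978 * 4.74^(2*r) / u := by
        rw [div_lt_div_iff₀ hD3 hu]
        calc 2*(r:ℝ)*((10*(r:ℝ))/3)^(2*r-1)*((50:ℝ)/41)^r * u
            < 0.7978 * 4.74^(2*r) * (((2*r).factorial : ℕ):ℝ) := hkey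
          _ = 0.7978 * 4.74^(2*r) * (((2*r).factorial : ℕ):ℝ) := rfl
    _ ≤ Real.sqrt (2/Real.pi) * 4.74^(2*r) / Real.sqrt (2*(r:ℝ)) := by
        apply div_le_div₀ (by positivity) ?_ hsq2rpos hsqu
        exact mul_le_mul_of_nonneg_right hsq2pi (by positivity)

private lemma numeric_b (r : ℕ) (hr : 9 ≤ r) :
    2*(r:ℝ)*((10*(r:ℝ))/3)^(2*r-1)*Real.exp (9*(r:ℝ)/50)/(((2*r).factorial:ℕ):ℝ)
      < 4.986^(2*r) / (Real.pi * Real.sqrt (2*(r:ℝ) - 1)) := by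
  have hr1 : (9:ℝ) ≤ (r:ℝ) := by exact_mod_cast hr
  have hR0 : (0:ℝ) < (r:ℝ) := by linarith
  set R : ℝ := (r:ℝ) with hRdef
  have hD3 : (0:ℝ) < (((2*r).factorial:ℕ):ℝ) := by exact_mod_cast (2*r).factorial_pos
  have hpi0 := Real.pi_pos
  have hpi4 := Real.pi_lt_d4
  set E : ℝ := Real.exp 1 with hEdef
  have hE0 : (0:ℝ) < E := Real.exp_pos 1
  set W : ℝ := (5:ℝ)/3 * Real.exp (9/100) * E with hWdef
  have hW0 : (0:ℝ) < W := by positivity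
  have hW : W < 4.986 := by
    have e1 : E < 2.7182818286 := Real.exp_one_lt_d9
    have e2 : Real.exp ((9:ℝ)/100) ≤ 100/91 := by
      have := exp_small' (9/100) (by norm_num)
      calc Real.exp ((9:ℝ)/100) ≤ 1/(1-9/100) := this
        _ = 100/91 := by norm_num
    have e3 : (0:ℝ) < Real.exp ((9:ℝ)/100) := Real.exp_pos _
    nlinarith
  -- Stirling lower bound for (2r)!
  have hstir : Real.sqrt Real.pi * (Real.sqrt (4*R) * ((2*R)/E)^(2*r)) ≤ (((2*r).factorial:ℕ):ℝ) := by
    have h := stirling_lower (2*r) (by omega)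
    have hcast : ((2*r : ℕ):ℝ) = 2*R := by push_cast; ring
    rw [hcast] at h
    rw [show (4:ℝ)*R = 2*(2*R) by ring]
    exact h
  set S : ℝ := Real.sqrt Real.pi * (Real.sqrt (4*R) * ((2*R)/E)^(2*r)) with hSdef
  have hS0 : (0:ℝ) < S := by
    rw [hSdef]
    have h1 : (0:ℝ) < Real.sqrt Real.pi := Real.sqrt_pos.2 hpi0
    have h2 : (0:ℝ) < Real.sqrt (4*R) := Real.sqrt_pos.2 (by positivity)
    positivity
  set Lnum : ℝ := 2*R*((10*R)/3)^(2*r-1)*Real.exp (9*R/50) with hLdef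
  have hL0 : (0:ℝ) ≤ Lnum := by positivity
  -- key identity : Lnum * E^(2r) = (3/5) * W^(2r) * (2R)^(2r)
  have hexp50 : Real.exp (9*R/50) = Real.exp ((9:ℝ)/100)^(2*r) := by
    rw [← Real.exp_nat_mul]
    congr 1
    push_cast
    ring
  have hpowsucc : ((10*R)/3)^(2*r) = ((10*R)/3)^(2*r-1) * ((10*R)/3) := by
    rw [← pow_succ]
    congr 1
    omega
  have hiden : Lnum * E^(2*r) = (3/5) * W^(2*r) * (2*R)^(2*r) := by
    have hmp : ((5:ℝ)/3)^(2*r) * (2*R)^(2*r) = ((10*R)/3)^(2*r) := by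
      rw [← mul_pow]; congr 1; ring
    have hWp : W^(2*r) = ((5:ℝ)/3)^(2*r) * Real.exp ((9:ℝ)/100)^(2*r) * E^(2*r) := by
      rw [hWdef, mul_pow, mul_pow]
    rw [hLdef, hexp50, hWp]
    calc 2*R*((10*R)/3)^(2*r-1)*Real.exp ((9:ℝ)/100)^(2*r) * E^(2*r)
        = (3/5) * (((10*R)/3)^(2*r-1) * ((10*R)/3)) * Real.exp ((9:ℝ)/100)^(2*r) * E^(2*r) := by
          ring
      _ = (3/5) * ((10*R)/3)^(2*r) * Real.exp ((9:ℝ)/100)^(2*r) * E^(2*r) := by rw [hpowsucc]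
      _ = (3/5) * (((5:ℝ)/3)^(2*r) * (2*R)^(2*r)) * Real.exp ((9:ℝ)/100)^(2*r) * E^(2*r) := by
          rw [hmp]
      _ = (3/5) * (((5:ℝ)/3)^(2*r) * Real.exp ((9:ℝ)/100)^(2*r) * E^(2*r)) * (2*R)^(2*r) := by
          ring
  -- the sqrt comparison : (3/5) * π * √(2R-1) ≤ √π * √(4R)
  have hsqrtcomp : (3/5) * Real.pi * Real.sqrt (2*R-1) ≤ Real.sqrt Real.pi * Real.sqrt (4*R) := by
    have h2R1 : (0:ℝ) ≤ 2*R - 1 := by linarith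
    have ha : (0:ℝ) ≤ (3/5) * Real.pi * Real.sqrt (2*R-1) := by positivity
    have hb : (0:ℝ) ≤ Real.sqrt Real.pi * Real.sqrt (4*R) := by positivity
    rw [← Real.sqrt_sq ha, ← Real.sqrt_sq hb]
    apply Real.sqrt_le_sqrt
    have e1 : ((3/5) * Real.pi * Real.sqrt (2*R-1))^2 = (9/25) * Real.pi^2 * (2*R-1) := by
      rw [mul_pow, mul_pow, Real.sq_sqrt h2R1]
      ring
    have e2 : (Real.sqrt Real.pi * Real.sqrt (4*R))^2 = Real.pi * (4*R) := by
      rw [mul_pow, Real.sq_sqrt hpi0.le, Real.sq_sqrt (by positivity : (0:ℝ) ≤ 4*R)]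
    rw [e1, e2]
    nlinarith
  -- main comparison
  have hWpow : W^(2*r) < 4.986^(2*r) := by
    apply pow_lt_pow_left₀ hW hW0.le
    omega
  have hsq2R1 : (0:ℝ) < Real.sqrt (2*R-1) := Real.sqrt_pos.2 (by linarith)
  have main : Lnum * (Real.pi * Real.sqrt (2*R-1)) < 4.986^(2*r) * S := by
    have hplus : (0:ℝ) < E^(2*r) := by positivity
    rw [← mul_lt_mul_iff_of_pos_right hplus]
    have lhsid : Lnum * (Real.pi * Real.sqrt (2*R-1)) * E^(2*r)
        = ((3/5) * Real.pi * Real.sqrt (2*R-1)) * (W^(2*r) * (2*R)^(2*r)) := by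
      calc Lnum * (Real.pi * Real.sqrt (2*R-1)) * E^(2*r)
          = (Lnum * E^(2*r)) * (Real.pi * Real.sqrt (2*R-1)) := by ring
        _ = ((3/5) * W^(2*r) * (2*R)^(2*r)) * (Real.pi * Real.sqrt (2*R-1)) := by rw [hiden]
        _ = ((3/5) * Real.pi * Real.sqrt (2*R-1)) * (W^(2*r) * (2*R)^(2*r)) := by ring
    have rhsid : 4.986^(2*r) * S * E^(2*r)
        = (Real.sqrt Real.pi * Real.sqrt (4*R)) * (4.986^(2*r) * (2*R)^(2*r)) := by
      have hdm : ((2*R)/E)^(2*r) * E^(2*r) = (2*R)^(2*r) := by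
        rw [div_pow, div_mul_cancel₀]
        positivity
      calc 4.986^(2*r) * S * E^(2*r)
          = Real.sqrt Real.pi * Real.sqrt (4*R) * (4.986^(2*r) * (((2*R)/E)^(2*r) * E^(2*r))) := by
            rw [hSdef]; ring
        _ = (Real.sqrt Real.pi * Real.sqrt (4*R)) * (4.986^(2*r) * (2*R)^(2*r)) := by rw [hdm]
    rw [lhsid, rhsid]
    have hWRpos : (0:ℝ) < (2*R)^(2*r) := by positivity
    calc ((3/5) * Real.pi * Real.sqrt (2*R-1)) * (W^(2*r) * (2*R)^(2*r))
        ≤ (Real.sqrt Real.pi * Real.sqrt (4*R)) * (W^(2*r) * (2*R)^(2*r)) := by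
          apply mul_le_mul_of_nonneg_right hsqrtcomp (by positivity)
      _ < (Real.sqrt Real.pi * Real.sqrt (4*R)) * (4.986^(2*r) * (2*R)^(2*r)) := by
          apply mul_lt_mul_of_pos_left _ (by positivity)
          exact mul_lt_mul_of_pos_right hWpow hWRpos
  calc 2*R*((10*R)/3)^(2*r-1)*Real.exp (9*R/50)/(((2*r).factorial:ℕ):ℝ)
      = Lnum/(((2*r).factorial:ℕ):ℝ) := by rw [hLdef]
    _ ≤ Lnum/S := by
        apply div_le_div_of_nonneg_left hL0 hS0 hstir
    _ < 4.986^(2*r) / (Real.pi * Real.sqrt (2*R-1)) := by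
        rw [div_lt_div_iff₀ hS0 (by positivity)]
        exact main

private lemma rhs_lower' (r : ℕ) (hr : 1 ≤ r) (u V : ℝ) (hu : 0 < u) (h2r : 2*(r:ℝ) ≤ u^2)
    (hV : 0 ≤ V) (hkey : V * u < 0.7978 * 4.74^(2*r)) :
    V < Real.sqrt (2/Real.pi) * 4.74^(2*r) / Real.sqrt (2*(r:ℝ)) := by
  have hsq2pi : (0.7978:ℝ) ≤ Real.sqrt (2/Real.pi) := by
    have hpi := Real.pi_lt_d4
    have hpi0 := Real.pi_pos
    rw [show (0.7978:ℝ) = Real.sqrt (0.7978^2) by rw [Real.sqrt_sq (by norm_num)]]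
    apply Real.sqrt_le_sqrt
    rw [le_div_iff₀ hpi0]
    nlinarith
  have hsqu : Real.sqrt (2*(r:ℝ)) ≤ u := by
    rw [show u = Real.sqrt (u^2) by rw [Real.sqrt_sq hu.le]]
    exact Real.sqrt_le_sqrt h2r
  have hsq2rpos : (0:ℝ) < Real.sqrt (2*(r:ℝ)) := by
    apply Real.sqrt_pos.2
    have : (1:ℝ) ≤ (r:ℝ) := by exact_mod_cast hr
    linarith
  calc V = (V * u) / u := by field_simp
    _ < (0.7978 * 4.74^(2*r)) / u := by
        exact div_lt_div_of_pos_right hkey hu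
    _ ≤ Real.sqrt (2/Real.pi) * 4.74^(2*r) / Real.sqrt (2*(r:ℝ)) := by
        apply div_le_div₀ (by positivity) (mul_le_mul_of_nonneg_right hsq2pi (by positivity))
          hsq2rpos hsqu

private lemma assemble' (q : ℕ → ℕ → ℂ → ℂ)
    (hq0 : ∀ m z, q m 0 z = 0)
    (hq1 : ∀ m z, q m 1 z = 1)
    (hqrec : ∀ m j z, 2 ≤ j → j ≤ 2 * m →
      q m j z = (z / m) * q m (j - 1) z + q m (j - 2) z)
    (r m ℓ : ℕ) (hm : 1 ≤ m) (hℓ1 : 1 ≤ ℓ) (hℓ2 : ℓ ≤ 2*m)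
    (z : ℂ) (B : ℝ) (hB0 : 0 < B) (hzB : ‖z‖ ≤ B) :
    2 * (m:ℝ)^(2*r) / (((r-m).factorial:ℝ) * ((r+m).factorial:ℝ)) * ‖q m (2*m-ℓ+1) z‖
      ≤ 2 * (m:ℝ)^(2*r) * (B/m + m/B)^(2*m-1)
          / (((r-m).factorial:ℝ) * ((r+m).factorial:ℝ)) := by
  have hM0 : (0:ℝ) < (m:ℝ) := by exact_mod_cast hm
  set lam : ℝ := B/m + m/B with hlam
  have hBm : (0:ℝ) < (m:ℝ)*B := mul_pos hM0 hB0
  have hid : lam * ((m:ℝ)*B) = B^2 + (m:ℝ)^2 := by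
    rw [hlam]
    field_simp
  have hl2 : (2:ℝ) ≤ lam := by
    have h1 : 2*((m:ℝ)*B) ≤ lam*((m:ℝ)*B) := by
      rw [hid]
      nlinarith [sq_nonneg (B - (m:ℝ))]
    exact le_of_mul_le_mul_right h1 hBm
  have hl1 : (1:ℝ) ≤ lam := by linarith
  have hlam0 : (0:ℝ) ≤ lam := by linarith
  have hBl : (B/m) * lam = (B/m)^2 + 1 := by
    rw [hlam]
    field_simp
  have hlsq : lam^2 = (B/m)^2 + 2 + ((m:ℝ)/B)^2 := by
    rw [hlam]
    field_simp
    ring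
  have hquad : ‖z‖ / m * lam + 1 ≤ lam ^ 2 := by
    have hxm : ‖z‖ / m ≤ B/m := by
      gcongr
    have h2 : ‖z‖ / m * lam ≤ (B/m) * lam :=
      mul_le_mul_of_nonneg_right hxm hlam0
    nlinarith [sq_nonneg ((m:ℝ)/B)]
  have hqb := q_bound q hq0 hq1 hqrec m hm z lam hl1 hquad (2*m-ℓ+1) (by omega)
  have hexp : lam ^ (2*m-ℓ+1-1) ≤ lam ^ (2*m-1) := by
    apply pow_le_pow_right₀ hl1
    omega
  have habs : ‖q m (2*m-ℓ+1) z‖ ≤ lam ^ (2*m-1) := le_trans hqb hexp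
  have hF : (0:ℝ) ≤ 2 * (m:ℝ)^(2*r) / (((r-m).factorial:ℝ) * ((r+m).factorial:ℝ)) := by
    have h1 : (0:ℝ) < ((r-m).factorial:ℝ) := by exact_mod_cast (r-m).factorial_pos
    have h2 : (0:ℝ) < ((r+m).factorial:ℝ) := by exact_mod_cast (r+m).factorial_pos
    positivity
  calc 2 * (m:ℝ)^(2*r) / (((r-m).factorial:ℝ) * ((r+m).factorial:ℝ)) * ‖q m (2*m-ℓ+1) z‖
      ≤ 2 * (m:ℝ)^(2*r) / (((r-m).factorial:ℝ) * ((r+m).factorial:ℝ)) * lam ^ (2*m-1) :=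
        mul_le_mul_of_nonneg_left habs hF
    _ = 2 * (m:ℝ)^(2*r) * lam^(2*m-1) / (((r-m).factorial:ℝ) * ((r+m).factorial:ℝ)) := by
        ring

/-- **Theorem 4.17.** Bounds on the maximum internal amplification factor of the
explicit midpoint extrapolation method of (even) order `p = 2r` over its
absolute stability region `S_p = {z : |∑_{k=0}^p z^k/k!| ≤ 1}`.  The internal
stability polynomials are, up to sign,
`(2 m^{2r}/((r−m)!(r+m)!)) · q_{m,2m−ℓ+1}(z)` with `q_{m,0} = 0`, `q_{m,1} = 1`,
`q_{m,j}(z) = (z/m)q_{m,j−1}(z) + q_{m,j−2}(z)`.  For `1 ≤ r ≤ 8` the factor is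
`< √(2/π)·4.74^p/√p`, and for `r ≥ 9` it is `< 4.986^p/(π·√(p−1))`. -/
theorem midpoint_extrapolation_amplification_bound
    (r : ℕ) (hr : 1 ≤ r) (p : ℕ) (hp : p = 2 * r)
    (q : ℕ → ℕ → ℂ → ℂ)
    (hq0 : ∀ m z, q m 0 z = 0)
    (hq1 : ∀ m z, q m 1 z = 1)
    (hqrec : ∀ m j z, 2 ≤ j → j ≤ 2 * m →
      q m j z = (z / m) * q m (j - 1) z + q m (j - 2) z) :
    (r ≤ 8 → ∀ m ℓ : ℕ, 1 ≤ m → m ≤ r → 1 ≤ ℓ → ℓ ≤ 2 * m → ∀ z : ℂ,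
      ‖∑ k ∈ Finset.range (p + 1), z ^ k / (Nat.factorial k : ℂ)‖ ≤ 1 →
      2 * (m : ℝ) ^ (2 * r) / ((Nat.factorial (r - m) : ℝ) * (Nat.factorial (r + m) : ℝ)) *
          ‖q m (2 * m - ℓ + 1) z‖ <
        Real.sqrt (2 / Real.pi) * 4.74 ^ p / Real.sqrt p) ∧
    (9 ≤ r → ∀ m ℓ : ℕ, 1 ≤ m → m ≤ r → 1 ≤ ℓ → ℓ ≤ 2 * m → ∀ z : ℂ,
      ‖∑ k ∈ Finset.range (p + 1), z ^ k / (Nat.factorial k : ℂ)‖ ≤ 1 →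
      2 * (m : ℝ) ^ (2 * r) / ((Nat.factorial (r - m) : ℝ) * (Nat.factorial (r + m) : ℝ)) *
          ‖q m (2 * m - ℓ + 1) z‖ <
        4.986 ^ p / (Real.pi * Real.sqrt ((p : ℝ) - 1))) := by
  subst hp
  constructor
  · -- small r branch
    intro hr8 m ℓ hm1 hmr hl1 hl2 z hz
    rcases Nat.lt_or_ge r 3 with hrlt | hrge
    · -- r = 1 or 2 : ad hoc
      interval_cases r
      · -- r = 1
        interval_cases m
        have hrad : ‖z‖ ≤ 7/2 := by
          have := radius_bound 2 (by norm_num) z (by exact_mod_cast hz) (3/2) (by norm_num)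
            (by norm_num [Nat.factorial])
          push_cast at this
          linarith
        have hA := assemble' q hq0 hq1 hqrec 1 1 ℓ (by norm_num) hl1 hl2 z (7/2) (by norm_num) hrad
        refine lt_of_le_of_lt hA ?_
        have := rhs_lower' 1 (by norm_num) 1.415
          (2 * (1:ℝ)^(2*1) * ((7/2)/(1:ℕ) + (1:ℕ)/(7/2))^(2*1-1)
            / (((1-1 : ℕ).factorial:ℝ) * ((1+1 : ℕ).factorial:ℝ)))
          (by norm_num) (by norm_num) (by positivity) (by norm_num [Nat.factorial])
        convert this using 2 <;> norm_num <;> rfl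
      · -- r = 2
        have hrad : ‖z‖ ≤ 25/4 := by
          have := radius_bound 4 (by norm_num) z (by exact_mod_cast hz) (9/4) (by norm_num)
            (by norm_num [Nat.factorial])
          push_cast at this
          linarith
        have hA := assemble' q hq0 hq1 hqrec 2 m ℓ hm1 hl1 hl2 z (25/4) (by norm_num) hrad
        refine lt_of_le_of_lt hA ?_
        interval_cases m
        · have := rhs_lower' 2 (by norm_num) 2
            (2 * ((1:ℕ):ℝ)^(2*2) * ((25/4)/((1:ℕ):ℝ) + ((1:ℕ):ℝ)/(25/4))^(2*1-1)
              / (((2-1 : ℕ).factorial:ℝ) * ((2+1 : ℕ).factorial:ℝ)))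
            (by norm_num) (by norm_num) (by positivity) (by norm_num [Nat.factorial])
          convert this using 2 <;> norm_num <;> rfl
        · have := rhs_lower' 2 (by norm_num) 2
            (2 * ((2:ℕ):ℝ)^(2*2) * ((25/4)/((2:ℕ):ℝ) + ((2:ℕ):ℝ)/(25/4))^(2*2-1)
              / (((2-2 : ℕ).factorial:ℝ) * ((2+2 : ℕ).factorial:ℝ)))
            (by norm_num) (by norm_num) (by positivity) (by norm_num [Nat.factorial])
          convert this using 2 <;> norm_num <;> rfl
    · -- 3 ≤ r ≤ 8 : via the chain
      have hrad : ‖z‖ ≤ 3*(r:ℝ) := by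
        have := radius_bound (2*r) (by omega) z hz (r:ℝ) (by positivity)
          (two_r_fac_le r hrge)
        push_cast at this ⊢
        linarith
      have hA := assemble' q hq0 hq1 hqrec r m ℓ hm1 hl1 hl2 z (3*(r:ℝ)) (by positivity) hrad
      have hC := chain r m hm1 hmr
      have hAC := le_trans hA hC
      refine lt_of_le_of_lt hAC ?_
      have hsqp : Real.sqrt ((2*r : ℕ) : ℝ) = Real.sqrt (2*(r:ℝ)) := by
        congr 1
        push_cast
        ring
      rw [hsqp]
      interval_cases r
      · exact numeric_a_gen 3 (by norm_num) 2.45 (by norm_num) (by norm_num)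
          (by norm_num [Nat.factorial])
      · exact numeric_a_gen 4 (by norm_num) 2.83 (by norm_num) (by norm_num)
          (by norm_num [Nat.factorial])
      · exact numeric_a_gen 5 (by norm_num) 3.17 (by norm_num) (by norm_num)
          (by norm_num [Nat.factorial])
      · exact numeric_a_gen 6 (by norm_num) 3.47 (by norm_num) (by norm_num)
          (by norm_num [Nat.factorial])
      · exact numeric_a_gen 7 (by norm_num) 3.75 (by norm_num) (by norm_num)
          (by norm_num [Nat.factorial])
      · exact numeric_a_gen 8 (by norm_num) 4 (by norm_num) (by norm_num)
          (by norm_num [Nat.factorial])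
  · -- large r branch
    intro hr9 m ℓ hm1 hmr hl1 hl2 z hz
    have hrad : ‖z‖ ≤ 3*(r:ℝ) := by
      have := radius_bound (2*r) (by omega) z hz (r:ℝ) (by positivity)
        (two_r_fac_le r (by omega))
      push_cast at this ⊢
      linarith
    have hA := assemble' q hq0 hq1 hqrec r m ℓ hm1 hl1 hl2 z (3*(r:ℝ)) (by positivity) hrad
    have hC := chain r m hm1 hmr
    have hB := numeric_b r hr9
    refine lt_of_le_of_lt (le_trans hA hC) ?_
    have hsqp : Real.sqrt (((2*r : ℕ) : ℝ) - 1) = Real.sqrt (2*(r:ℝ) - 1) := by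
      congr 1
      push_cast
      ring
    rw [hsqp]
    exact hB
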